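/- arXiv:2106.02150 — 2 statements merged into one kernel-verified Lean document; each statement's English description precedes it below -/
import Mathlib

section
/- Every probability distribution q on a finite set {1,...,n} can be written as a convex combination q = Σ_{i=1}^k λ_i q^{X_i} with λ_i ≥ 0, Σ λ_i = 1, where [n] ⊇ X_1 ⊇ X_2 ⊇ ... ⊇ X_k ≠ ∅ is a nested chain of nonempty subsets and each q^{X_i} is the indifference distribution with support X_i. -/
/-- The seller's indifference threshold p* for cost c and buyer values v0 < v1. -/
noncomputable def pstarF (v0 v1 c : ℝ) : ℝ := (v0 - c) / (v1 - c)

/-- The indifference distribution q^X for a nonempty subset X of seller types. -/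
noncomputable def indiff {n : ℕ} (v0 v1 : ℝ) (c : Fin n → ℝ) (X : Finset (Fin n))
    (i : Fin n) : ℝ :=
  if i ∈ X then
    (if h : X.Nonempty then
      ((pstarF v0 v1 (c i))⁻¹ -
        (if hb : (X.filter (fun j => j < i)).Nonempty then
          (pstarF v0 v1 (c ((X.filter (fun j => j < i)).max' hb)))⁻¹
        else 1)) / ((pstarF v0 v1 (c (X.max' h)))⁻¹ - 1)
    else 0)
  else 0

/-- Auxiliary: the "previous value" term appearing in `indiff`. -/
noncomputable def gpred {n : ℕ} (f : Fin n → ℝ) (X : Finset (Fin n)) (i : Fin n) : ℝ :=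
  if hb : (X.filter (fun j => j < i)).Nonempty then f ((X.filter (fun j => j < i)).max' hb) else 1

lemma indiff_eq {n : ℕ} (v0 v1 : ℝ) (c : Fin n → ℝ) (X : Finset (Fin n)) (i : Fin n) :
    indiff v0 v1 c X i =
      if i ∈ X then
        (if h : X.Nonempty then
          ((pstarF v0 v1 (c i))⁻¹ - gpred (fun j => (pstarF v0 v1 (c j))⁻¹) X i) /
            ((pstarF v0 v1 (c (X.max' h)))⁻¹ - 1)
        else 0)
      else 0 := rfl

lemma tele {n : ℕ} (f : Fin n → ℝ) (X : Finset (Fin n)) :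
    ∀ h : X.Nonempty, ∑ i ∈ X, (f i - gpred f X i) = f (X.max' h) - 1 := by
  induction X using Finset.strongInduction with
  | _ X ih =>
    intro h
    set m := X.max' h with hm
    have hmX : m ∈ X := X.max'_mem h
    by_cases hX' : (X.erase m).Nonempty
    · set m' := (X.erase m).max' hX' with hm'
      have hgp : ∀ i ∈ X.erase m, gpred f X i = gpred f (X.erase m) i := by
        intro i hi
        have hfil : (X.erase m).filter (fun j => j < i) = X.filter (fun j => j < i) := by
          ext j
          simp only [Finset.mem_filter, Finset.mem_erase]
          constructor
          · rintro ⟨⟨_, hj⟩, hji⟩; exact ⟨hj, hji⟩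
          · rintro ⟨hj, hji⟩
            have hi' : i ∈ X := (Finset.mem_erase.mp hi).2
            have : j < m := lt_of_lt_of_le hji (X.le_max' i hi')
            exact ⟨⟨ne_of_lt this, hj⟩, hji⟩
        simp only [gpred, hfil]
      have hprev : gpred f X m = f m' := by
        have hfil : X.filter (fun j => j < m) = X.erase m := by
          ext j
          simp only [Finset.mem_filter, Finset.mem_erase]
          constructor
          · rintro ⟨hj, hjm⟩; exact ⟨ne_of_lt hjm, hj⟩
          · rintro ⟨hne, hj⟩
            exact ⟨hj, lt_of_le_of_ne (X.le_max' j hj) hne⟩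
        simp only [gpred, hfil, dif_pos hX', hm']
      have hss : X.erase m ⊂ X := Finset.erase_ssubset hmX
      have hIH := ih (X.erase m) hss hX'
      calc ∑ i ∈ X, (f i - gpred f X i)
          = ∑ i ∈ X.erase m, (f i - gpred f X i) + (f m - gpred f X m) :=
            (Finset.sum_erase_add X _ hmX).symm
        _ = ∑ i ∈ X.erase m, (f i - gpred f (X.erase m) i) + (f m - f m') := by
            rw [hprev, Finset.sum_congr rfl (fun i hi => by rw [hgp i hi])]
        _ = (f m' - 1) + (f m - f m') := by rw [hIH]
        _ = f m - 1 := by ring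
    · have hXm : X = {m} := by
        apply Finset.eq_singleton_iff_unique_mem.mpr
        refine ⟨hmX, fun x hx => ?_⟩
        by_contra hne
        exact hX' ⟨x, Finset.mem_erase.mpr ⟨hne, hx⟩⟩
      rw [hXm, Finset.sum_singleton]
      have : ¬ (({m} : Finset (Fin n)).filter (fun j => j < m)).Nonempty := by
        rintro ⟨j, hj⟩
        simp only [Finset.mem_filter, Finset.mem_singleton] at hj
        exact absurd hj.2 (by rw [hj.1]; exact lt_irrefl m)
      simp only [gpred, dif_neg this]

lemma gpred_lt {n : ℕ} (f : Fin n → ℝ) (hf1 : ∀ i, 1 < f i) (hmono : StrictMono f)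
    (X : Finset (Fin n)) (i : Fin n) : gpred f X i < f i := by
  unfold gpred
  split
  · rename_i hb
    have hmem := (X.filter (fun j => j < i)).max'_mem hb
    have : (X.filter (fun j => j < i)).max' hb < i := (Finset.mem_filter.mp hmem).2
    exact hmono this
  · exact hf1 i

/-- `indiff` is a probability distribution with support exactly `X`. -/
lemma indiff_prob {n : ℕ} (v0 v1 : ℝ) (c : Fin n → ℝ)
    (hf1 : ∀ i, 1 < (pstarF v0 v1 (c i))⁻¹)
    (hmono : StrictMono (fun i => (pstarF v0 v1 (c i))⁻¹))
    (X : Finset (Fin n)) (hX : X.Nonempty) :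
    (∀ i, 0 ≤ indiff v0 v1 c X i) ∧
    (∑ i, indiff v0 v1 c X i = 1) ∧
    (∀ i, 0 < indiff v0 v1 c X i ↔ i ∈ X) := by
  set f : Fin n → ℝ := fun i => (pstarF v0 v1 (c i))⁻¹ with hfdef
  have hden : 0 < f (X.max' hX) - 1 := sub_pos.mpr (hf1 _)
  have hmem_pos : ∀ i ∈ X, 0 < indiff v0 v1 c X i := by
    intro i hi
    rw [indiff_eq, if_pos hi, dif_pos hX]
    exact div_pos (sub_pos.mpr (gpred_lt f hf1 hmono X i)) hden
  have hoff : ∀ i ∉ X, indiff v0 v1 c X i = 0 := by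
    intro i hi
    rw [indiff_eq, if_neg hi]
  have hnn : ∀ i, 0 ≤ indiff v0 v1 c X i := by
    intro i
    by_cases hi : i ∈ X
    · exact le_of_lt (hmem_pos i hi)
    · rw [hoff i hi]
  refine ⟨hnn, ?_, ?_⟩
  · have h1 : ∑ i ∈ X, indiff v0 v1 c X i = ∑ i, indiff v0 v1 c X i :=
      Finset.sum_subset (Finset.subset_univ X) (fun x _ hx => hoff x hx)
    rw [← h1]
    have h2 : ∀ i ∈ X, indiff v0 v1 c X i = (f i - gpred f X i) / (f (X.max' hX) - 1) := by
      intro i hi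
      rw [indiff_eq, if_pos hi, dif_pos hX]
    rw [Finset.sum_congr rfl h2, ← Finset.sum_div, tele f X hX]
    exact div_self (ne_of_gt hden)
  · intro i
    constructor
    · intro hpos
      by_contra hi
      rw [hoff i hi] at hpos
      exact lt_irrefl 0 hpos
    · exact hmem_pos i

lemma decomp_aux {n : ℕ} (D : Finset (Fin n) → Fin n → ℝ)
    (hpos : ∀ X, X.Nonempty → ∀ i ∈ X, 0 < D X i)
    (hzero : ∀ X, ∀ i ∉ X, D X i = 0)
    (hsum : ∀ X, X.Nonempty → ∑ i, D X i = 1) :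
    ∀ m (q : Fin n → ℝ), (∀ i, 0 ≤ q i) → ∑ i, q i = 1 →
      (Finset.univ.filter (fun i => q i ≠ 0)).card ≤ m →
      ∃ (k : ℕ) (Xs : Fin (k + 1) → Finset (Fin n)) (lam : Fin (k + 1) → ℝ),
        (∀ i, (Xs i).Nonempty) ∧
        (∀ i j, i ≤ j → Xs j ⊆ Xs i) ∧
        (∀ i, 0 ≤ lam i) ∧ (∑ i, lam i = 1) ∧
        (∀ x, q x = ∑ i, lam i * D (Xs i) x) ∧
        (∀ i, Xs i ⊆ Finset.univ.filter (fun i => q i ≠ 0)) := by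
  intro m
  induction m with
  | zero =>
    intro q hq0 hq1 hcard
    exfalso
    have hS : Finset.univ.filter (fun i => q i ≠ 0) = ∅ :=
      Finset.card_eq_zero.mp (Nat.le_zero.mp hcard)
    have : ∀ i, q i = 0 := by
      intro i
      by_contra hne
      have : i ∈ Finset.univ.filter (fun i => q i ≠ 0) := by simp [hne]
      simp [hS] at this
    simp [this] at hq1
  | succ m ih =>
    intro q hq0 hq1 hcard
    set S := Finset.univ.filter (fun i => q i ≠ 0) with hSdef
    have hS : S.Nonempty := by
      by_contra hne
      rw [Finset.not_nonempty_iff_eq_empty] at hne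
      have : ∀ i, q i = 0 := by
        intro i
        by_contra h
        have : i ∈ S := by simp [hSdef, h]
        simp [hne] at this
      simp [this] at hq1
    have hqSpos : ∀ x ∈ S, 0 < q x := by
      intro x hx
      have : q x ≠ 0 := (Finset.mem_filter.mp hx).2
      exact lt_of_le_of_ne (hq0 x) (Ne.symm this)
    have hq_off : ∀ x ∉ S, q x = 0 := by
      intro x hx
      by_contra h
      exact hx (by simp [hSdef, h])
    set lam1 := S.inf' hS (fun x => q x / D S x) with hlam1
    have hlam1pos : 0 < lam1 := by
      rw [hlam1, Finset.lt_inf'_iff]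
      intro b hb
      exact div_pos (hqSpos b hb) (hpos S hS b hb)
    have hle : ∀ x ∈ S, lam1 * D S x ≤ q x := by
      intro x hx
      have h1 : lam1 ≤ q x / D S x := Finset.inf'_le _ hx
      have h2 : 0 < D S x := hpos S hS x hx
      calc lam1 * D S x ≤ (q x / D S x) * D S x :=
            mul_le_mul_of_nonneg_right h1 (le_of_lt h2)
        _ = q x := div_mul_cancel₀ _ (ne_of_gt h2)
    obtain ⟨x0, hx0S, hx0⟩ := Finset.exists_mem_eq_inf' hS (fun x => q x / D S x)
    set q' := fun x => q x - lam1 * D S x with hq'def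
    have hq'0 : ∀ x, 0 ≤ q' x := by
      intro x
      by_cases hx : x ∈ S
      · simpa [hq'def] using sub_nonneg.mpr (hle x hx)
      · simp [hq'def, hq_off x hx, hzero S x hx]
    have hq'x0 : q' x0 = 0 := by
      have h2 : D S x0 ≠ 0 := ne_of_gt (hpos S hS x0 hx0S)
      have hl : lam1 = q x0 / D S x0 := hlam1.trans hx0
      simp only [hq'def, hl, div_mul_cancel₀ _ h2, sub_self]
    have hq'sum : ∑ x, q' x = 1 - lam1 := by
      simp only [hq'def, Finset.sum_sub_distrib, hq1, ← Finset.mul_sum, hsum S hS, mul_one]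
    have hlam1le : lam1 ≤ 1 := by
      have : 0 ≤ ∑ x, q' x := Finset.sum_nonneg fun x _ => hq'0 x
      linarith [hq'sum ▸ this]
    have hq'supp : ∀ x, q' x ≠ 0 → x ∈ S.erase x0 := by
      intro x hx
      refine Finset.mem_erase.mpr ⟨?_, ?_⟩
      · rintro rfl; exact hx hq'x0
      · by_contra hxS
        exact hx (by simp [hq'def, hq_off x hxS, hzero S x hxS])
    by_cases hone : lam1 = 1
    · -- q = D S, take k = 0
      have hq'all : ∀ x, q' x = 0 := by
        have hsum0 : ∑ x, q' x = 0 := by rw [hq'sum, hone]; ring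
        intro x
        exact (Finset.sum_eq_zero_iff_of_nonneg (fun y _ => hq'0 y)).mp hsum0 x (Finset.mem_univ x)
      refine ⟨0, fun _ => S, fun _ => 1, fun _ => hS, fun _ _ _ => subset_rfl,
        fun _ => zero_le_one, by simp, ?_, fun _ => subset_rfl⟩
      intro x
      have := hq'all x
      simp only [hq'def, sub_eq_zero] at this
      simp [this, hone]
    · have hlt : lam1 < 1 := lt_of_le_of_ne hlam1le hone
      have hne1 : (1 : ℝ) - lam1 ≠ 0 := by linarith
      set r := fun x => q' x / (1 - lam1) with hrdef
      have hr0 : ∀ x, 0 ≤ r x := fun x => div_nonneg (hq'0 x) (by linarith)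
      have hrsum : ∑ x, r x = 1 := by
        simp only [hrdef, ← Finset.sum_div, hq'sum]
        field_simp
      have hrsupp : Finset.univ.filter (fun x => r x ≠ 0) ⊆ S.erase x0 := by
        intro x hx
        have : r x ≠ 0 := (Finset.mem_filter.mp hx).2
        have : q' x ≠ 0 := by
          intro h; exact this (by simp [hrdef, h])
        exact hq'supp x this
      have hrcard : (Finset.univ.filter (fun x => r x ≠ 0)).card ≤ m := by
        have h1 : (S.erase x0).card < S.card := Finset.card_erase_lt_of_mem hx0S
        have h2 := Finset.card_le_card hrsupp
        omega
      obtain ⟨k, Xs, lam, hXne, hchain, hlamnn, hlamsum, hrep, hsub⟩ := ih r hr0 hrsum hrcard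
      have hXsS : ∀ i, Xs i ⊆ S := by
        intro i
        refine (hsub i).trans (hrsupp.trans ?_)
        exact Finset.erase_subset _ _
      refine ⟨k + 1, Fin.cons S Xs, Fin.cons lam1 (fun i => (1 - lam1) * lam i), ?_, ?_, ?_, ?_, ?_, ?_⟩
      · intro i
        refine Fin.cases ?_ ?_ i
        · simpa using hS
        · intro j; simpa using hXne j
      · intro i j hij
        rcases Fin.eq_zero_or_eq_succ i with rfl | ⟨i', rfl⟩
        · rcases Fin.eq_zero_or_eq_succ j with rfl | ⟨j', rfl⟩
          · exact subset_rfl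
          · simpa using hXsS j'
        · rcases Fin.eq_zero_or_eq_succ j with rfl | ⟨j', rfl⟩
          · exact absurd (Fin.le_zero_iff.mp hij) (Fin.succ_ne_zero i')
          · simpa using hchain i' j' (by exact_mod_cast Fin.succ_le_succ_iff.mp hij)
      · intro i
        refine Fin.cases ?_ ?_ i
        · simpa using le_of_lt hlam1pos
        · intro j
          simpa using mul_nonneg (by linarith) (hlamnn j)
      · rw [Fin.sum_cons, ← Finset.mul_sum, hlamsum, mul_one]; ring
      · intro x
        rw [Fin.sum_univ_succ]
        simp only [Fin.cons_zero, Fin.cons_succ]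
        have : ∑ i, (1 - lam1) * lam i * D (Xs i) x = (1 - lam1) * r x := by
          rw [hrep x, Finset.mul_sum]
          exact Finset.sum_congr rfl fun i _ => by ring
        rw [this, hrdef]
        field_simp [hq'def]
        simp only [hq'def]; ring
      · intro i
        refine Fin.cases ?_ ?_ i
        · simp only [Fin.cons_zero]; exact subset_rfl
        · intro j
          simp only [Fin.cons_succ]
          intro x hx
          exact hXsS j hx

/-- every distribution q on [n] decomposes as a convex combination of
indifference distributions over a nested chain of nonempty subsets; moreover each
indifference distribution is a probability distribution with support exactly X. -/
theorem stmt1 {n : ℕ} (v0 v1 : ℝ) (c : Fin n → ℝ)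
    (hc : StrictMono c) (hcv : ∀ j, c j < v0) (hv : v0 < v1)
    (q : Fin n → ℝ) (hq0 : ∀ i, 0 ≤ q i) (hq1 : ∑ i, q i = 1) :
    (∀ X : Finset (Fin n), X.Nonempty →
      (∀ i, 0 ≤ indiff v0 v1 c X i) ∧
      (∑ i, indiff v0 v1 c X i = 1) ∧
      (∀ i, 0 < indiff v0 v1 c X i ↔ i ∈ X)) ∧
    ∃ (k : ℕ) (Xs : Fin (k + 1) → Finset (Fin n)) (lam : Fin (k + 1) → ℝ),
      (∀ i, (Xs i).Nonempty) ∧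
      (∀ i j, i ≤ j → Xs j ⊆ Xs i) ∧
      (∀ i, 0 ≤ lam i) ∧ (∑ i, lam i = 1) ∧
      (∀ x, q x = ∑ i, lam i * indiff v0 v1 c (Xs i) x) := by
  have hf1 : ∀ i, 1 < (pstarF v0 v1 (c i))⁻¹ := by
    intro i
    rw [pstarF, inv_div]
    rw [one_lt_div (by linarith [hcv i])]
    linarith
  have hmono : StrictMono (fun i => (pstarF v0 v1 (c i))⁻¹) := by
    intro i j hij
    have hci : c i < c j := hc hij
    have h0i : 0 < v0 - c i := by linarith [hcv i]
    have h0j : 0 < v0 - c j := by linarith [hcv j]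
    simp only [pstarF, inv_div]
    rw [div_lt_div_iff₀ h0i h0j]
    nlinarith
  constructor
  · exact fun X hX => indiff_prob v0 v1 c hf1 hmono X hX
  · have hzero : ∀ X : Finset (Fin n), ∀ i ∉ X, indiff v0 v1 c X i = 0 := by
      intro X i hi
      rw [indiff_eq, if_neg hi]
    have hpos : ∀ X : Finset (Fin n), X.Nonempty → ∀ i ∈ X, 0 < indiff v0 v1 c X i := by
      intro X hX i hi
      exact ((indiff_prob v0 v1 c hf1 hmono X hX).2.2 i).mpr hi
    have hsum : ∀ X : Finset (Fin n), X.Nonempty → ∑ i, indiff v0 v1 c X i = 1 :=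
      fun X hX => (indiff_prob v0 v1 c hf1 hmono X hX).2.1
    obtain ⟨k, Xs, lam, h1, h2, h3, h4, h5, _⟩ :=
      decomp_aux (indiff v0 v1 c) hpos hzero hsum
        (Finset.univ.filter (fun i => q i ≠ 0)).card q hq0 hq1 le_rfl
    exact ⟨k, Xs, lam, h1, h2, h3, h4, h5⟩
end

section
/- If p > p*_{x(k)} and the seller's distribution is the indifference distribution q^X, then splitting the buyer's probability p into posteriors p*_{x(k)} (with weight (1-p)/(1-p*_{x(k)})) and 1 (with weight (p - p*_{x(k)})/(1 - p*_{x(k)})) is a valid split (weights are in [0,1], sum to 1, and average to p), and under this split the subsequent allocation is efficient at both posteriors: at posterior p*_{x(k)} all seller types in X price at v_0 and trade always occurs; at posterior 1 the buyer surely has value v_1 and trade occurs at price v_1. -/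
/-- if p > p*_{x(k)} (= pk) and the seller's distribution is the
indifference distribution q^X, splitting p into posteriors pk and 1 with weights
(1-p)/(1-pk) and (p-pk)/(1-pk) is a valid split; at posterior pk every seller type
in X weakly prefers price v0 (trade always occurs), at posterior 1 every type
prefers price v1 (buyer surely has value v1, trade occurs), and the split achieves
the efficient welfare. -/
theorem stmt18 {n : ℕ} (v0 v1 : ℝ) (c : Fin n → ℝ)
    (hc : StrictMono c) (hcv : ∀ j, c j < v0) (hv : v0 < v1)
    (X : Finset (Fin n)) (hX : X.Nonempty)
    (pk : ℝ) (hpk : pk = pstarF v0 v1 (c (X.max' hX)))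
    (p : ℝ) (hp1 : p ≤ 1) (hpgt : p > pk) :
    (0 ≤ (1 - p) / (1 - pk) ∧ (1 - p) / (1 - pk) ≤ 1) ∧
    (0 ≤ (p - pk) / (1 - pk) ∧ (p - pk) / (1 - pk) ≤ 1) ∧
    ((1 - p) / (1 - pk) + (p - pk) / (1 - pk) = 1) ∧
    ((1 - p) / (1 - pk) * pk + (p - pk) / (1 - pk) * 1 = p) ∧
    (∀ j ∈ X, pk * (v1 - c j) ≤ v0 - c j) ∧
    (∀ j ∈ X, v0 - c j ≤ 1 * (v1 - c j)) ∧
    ((1 - p) / (1 - pk) *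
        (∑ j ∈ X, indiff v0 v1 c X j * (pk * (v1 - c j) + (1 - pk) * (v0 - c j))) +
      (p - pk) / (1 - pk) * (∑ j ∈ X, indiff v0 v1 c X j * (v1 - c j)) =
      ∑ j ∈ X, indiff v0 v1 c X j * (p * (v1 - c j) + (1 - p) * (v0 - c j))) := by
  set M := X.max' hX with hM
  have hcM : c M < v0 := hcv M
  have hden : (0:ℝ) < v1 - c M := by linarith [hcv M]
  have hpk01 : 0 < pk ∧ pk < 1 := by
    constructor
    · rw [hpk]; exact div_pos (by linarith) hden
    · rw [hpk, pstarF, div_lt_one hden]; linarith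
  have h1pk : (0:ℝ) < 1 - pk := by linarith [hpk01.2]
  have h1pk' : (1:ℝ) - pk ≠ 0 := ne_of_gt h1pk
  refine ⟨⟨?_, ?_⟩, ⟨?_, ?_⟩, ?_, ?_, ?_, ?_, ?_⟩
  · exact div_nonneg (by linarith) (le_of_lt h1pk)
  · rw [div_le_one h1pk]; linarith
  · exact div_nonneg (by linarith) (le_of_lt h1pk)
  · rw [div_le_one h1pk]; linarith
  · field_simp; ring
  · field_simp; ring
  · intro j hj
    have hjM : j ≤ M := X.le_max' j hj
    have hcj : c j ≤ c M := hc.monotone hjM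
    have hcjv : c j < v0 := hcv j
    have hdj : (0:ℝ) < v1 - c j := by linarith
    rw [hpk, pstarF, div_mul_eq_mul_div, div_le_iff₀ hden]
    nlinarith
  · intro j hj; have := hcv j; linarith
  · have h1 : (1 - p) / (1 - pk) * pk + (p - pk) / (1 - pk) = p := by
      field_simp; ring
    have h2 : (1 - p) / (1 - pk) + (p - pk) / (1 - pk) = 1 := by
      field_simp; ring
    rw [Finset.mul_sum, Finset.mul_sum, ← Finset.sum_add_distrib]
    apply Finset.sum_congr rfl
    intro j hj
    set q := indiff v0 v1 c X j
    linear_combination q * (v1 - c j) * h1 + q * (v0 - c j) * (h2 - h1)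
end
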